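/- The quaternion group Q_8 of order 8 is supersolvable and metabelian, but Q_8 does not embed into any finite direct product G_{p_1} × … × G_{p_s} with p_1,…,p_s primes. Consequently the class of finite groups embeddable into such products is strictly contained in the class of finite supersolvable metabelian groups. -/

import Mathlib

/-- A finite group is supersolvable: there is a chain `1 = G₀ ≤ G₁ ≤ … ≤ G_k = G` of
subgroups, each normal in `G`, with each quotient `G_{i+1}/G_i` cyclic (expressed as: some
`g ∈ G_{i+1}` is such that every element of `G_{i+1}` is of the form `g ^ m * y` with
`y ∈ G_i`). -/
def IsSupersolvableGroup (G : Type*) [Group G] : Prop :=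
  ∃ (k : ℕ) (c : Fin (k + 1) → Subgroup G),
    c 0 = ⊥ ∧ c (Fin.last k) = ⊤ ∧
    (∀ i : Fin k, c i.castSucc ≤ c i.succ) ∧
    (∀ i : Fin (k + 1), (c i).Normal) ∧
    (∀ i : Fin k, ∃ g ∈ c i.succ, ∀ x ∈ c i.succ,
      ∃ (m : ℤ) (y : G), y ∈ c i.castSucc ∧ x = g ^ m * y)

/-- The holomorph-type action: a unit `u` of `ZMod p` acts on the additive group `ZMod p`
(viewed multiplicatively) by multiplication by `u`. -/
def holAction (p : ℕ) : (ZMod p)ˣ →* MulAut (Multiplicative (ZMod p)) where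
  toFun u := AddEquiv.toMultiplicative (AddAut.mulLeft u)
  map_one' := by ext x; exact one_smul (ZMod p)ˣ (Multiplicative.toAdd x)
  map_mul' u v := by ext x; exact congrArg Multiplicative.ofAdd (mul_smul u v (Multiplicative.toAdd x))

/-- `G_p = (ℤ/pℤ) ⋊ (ℤ/pℤ)ˣ`, the holomorph of the cyclic group of order `p`, with units
acting by multiplication. -/
def Holo (p : ℕ) : Type :=
  SemidirectProduct (Multiplicative (ZMod p)) (ZMod p)ˣ (holAction p)

instance (p : ℕ) : Group (Holo p) :=
  inferInstanceAs (Group (SemidirectProduct _ _ _))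

/-- `G` embeds into a finite direct product of groups `G_p` (`p` prime). -/
def EmbedsInHolos (G : Type*) [Group G] : Prop :=
  ∃ (s : ℕ) (ps : Fin s → ℕ), (∀ i, (ps i).Prime) ∧
    ∃ f : G →* (∀ i, Holo (ps i)), Function.Injective f

/-! ### Auxiliary lemmas -/

section Aux

/-- Supersolvability pulls back along injective homomorphisms. -/
lemma supersolvable_of_injective {G P : Type*} [Group G] [Group P] (f : G →* P)
    (hf : Function.Injective f) (hP : IsSupersolvableGroup P) : IsSupersolvableGroup G := by
  obtain ⟨k, c, h0, htop, hmono, hnorm, hcyc⟩ := hP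
  refine ⟨k, fun i => (c i).comap f, ?_, ?_, fun i => Subgroup.comap_mono (hmono i),
    fun i => (hnorm i).comap f, ?_⟩
  · show Subgroup.comap f (c 0) = ⊥
    rw [h0, MonoidHom.comap_bot, MonoidHom.ker_eq_bot_iff]; exact hf
  · show Subgroup.comap f (c (Fin.last k)) = ⊤
    rw [htop, Subgroup.comap_top]
  · intro i
    obtain ⟨g, hg, hgen⟩ := hcyc i
    haveI := hnorm i.castSucc
    set π : P →* P ⧸ c i.castSucc := QuotientGroup.mk' (c i.castSucc) with hπ
    let M : AddSubgroup ℤ :=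
    { carrier := {m | ∃ x : G, f x ∈ c i.succ ∧ π (f x) = π g ^ m}
      zero_mem' := ⟨1, by rw [map_one]; exact one_mem _, by rw [map_one, map_one, zpow_zero]⟩
      add_mem' := by
        rintro m m' ⟨x, hx, hx2⟩ ⟨x', hx', hx2'⟩
        exact ⟨x * x', by rw [map_mul]; exact mul_mem hx hx',
          by rw [map_mul, map_mul, hx2, hx2', zpow_add]⟩
      neg_mem' := by
        rintro m ⟨x, hx, hx2⟩
        exact ⟨x⁻¹, by rw [map_inv]; exact inv_mem hx,
          by rw [map_inv, map_inv, hx2, zpow_neg]⟩ }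
    obtain ⟨d, hd⟩ := Int.subgroup_cyclic M
    have hdM : d ∈ M := hd ▸ AddSubgroup.subset_closure (Set.mem_singleton d)
    obtain ⟨g₀, hg₀mem, hg₀⟩ := hdM
    refine ⟨g₀, Subgroup.mem_comap.mpr hg₀mem, ?_⟩
    intro x hx
    have hfx : f x ∈ c i.succ := Subgroup.mem_comap.mp hx
    obtain ⟨m, y, hy, hxy⟩ := hgen (f x) hfx
    have hπy : π y = 1 := (QuotientGroup.eq_one_iff y).mpr hy
    have hm : π (f x) = π g ^ m := by rw [hxy, map_mul, map_zpow, hπy, mul_one]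
    have hmM : m ∈ M := ⟨x, hfx, hm⟩
    rw [hd] at hmM
    obtain ⟨t, ht⟩ := AddSubgroup.mem_closure_singleton.mp hmM
    refine ⟨t, (g₀ ^ t)⁻¹ * x, Subgroup.mem_comap.mpr ?_, by group⟩
    have key : π (f ((g₀ ^ t)⁻¹ * x)) = 1 := by
      rw [map_mul f, map_inv f, map_zpow f, map_mul π, map_inv π, map_zpow π, hg₀, ← zpow_mul,
        hm, ← ht, smul_eq_mul, mul_comm d t, inv_mul_cancel]
    exact (QuotientGroup.eq_one_iff _).mp key

/-- Metabelianity pulls back along injective homomorphisms. -/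
lemma metabelian_of_injective {G P : Type*} [Group G] [Group P] (f : G →* P)
    (hf : Function.Injective f)
    (hP : ∀ a b : P, a ∈ commutator P → b ∈ commutator P → a * b = b * a) :
    ∀ a b : commutator G, a * b = b * a := by
  have hmap : ∀ a : G, a ∈ commutator G → f a ∈ commutator P := by
    intro a ha
    have : commutator G ≤ (commutator P).comap f := by
      rw [commutator_def G]
      refine Subgroup.commutator_le.mpr fun g1 _ g2 _ => Subgroup.mem_comap.mpr ?_
      rw [map_commutatorElement]
      exact Subgroup.commutator_mem_commutator (Subgroup.mem_top (f g1)) (Subgroup.mem_top (f g2))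
    exact Subgroup.mem_comap.mp (this ha)
  rintro ⟨a, ha⟩ ⟨b, hb⟩
  ext
  show a * b = b * a
  apply hf
  rw [map_mul, map_mul, hP (f a) (f b) (hmap a ha) (hmap b hb)]

/-! ### Structure of `Holo p` and products thereof -/

def HR (p : ℕ) : Holo p →* (ZMod p)ˣ := SemidirectProduct.rightHom
def Hinl (p : ℕ) : Multiplicative (ZMod p) →* Holo p := SemidirectProduct.inl
def Hinr (p : ℕ) : (ZMod p)ˣ →* Holo p := SemidirectProduct.inr

lemma eq_inl_of_right_eq_one {p : ℕ} (x : Holo p) (h : HR p x = 1) :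
    x = Hinl p (SemidirectProduct.left x) := by
  conv_lhs => rw [← SemidirectProduct.inl_left_mul_inr_right x]
  rw [show SemidirectProduct.right x = 1 from h, map_one, mul_one]
  rfl

lemma HR_inl {p : ℕ} (a : Multiplicative (ZMod p)) : HR p (Hinl p a) = 1 :=
  SemidirectProduct.rightHom_inl a

lemma HR_inr {p : ℕ} (u : (ZMod p)ˣ) : HR p (Hinr p u) = u :=
  SemidirectProduct.rightHom_inr u

variable {s : ℕ} (ps : Fin s → ℕ)

/-- The chain of subgroups of `∏ i, Holo (ps i)` witnessing supersolvability: at stage `n`,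
coordinates `i` with `2 * i ≥ n` are trivial, and coordinate `i` with `2 * i + 1 = n` is
constrained to the left (cyclic) factor. -/
def chainP (n : ℕ) : Subgroup (∀ i, Holo (ps i)) where
  carrier := {x | ∀ i : Fin s,
    (n ≤ 2 * i.val → x i = 1) ∧ (n ≤ 2 * i.val + 1 → HR (ps i) (x i) = 1)}
  one_mem' := fun i => ⟨fun _ => rfl, fun _ => map_one _⟩
  mul_mem' := by
    intro a b ha hb i
    refine ⟨fun h => ?_, fun h => ?_⟩
    · show a i * b i = 1; rw [(ha i).1 h, (hb i).1 h, one_mul]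
    · show HR (ps i) (a i * b i) = 1; rw [map_mul, (ha i).2 h, (hb i).2 h, one_mul]
  inv_mem' := by
    intro a ha i
    refine ⟨fun h => ?_, fun h => ?_⟩
    · show (a i)⁻¹ = 1; rw [(ha i).1 h, inv_one]
    · show HR (ps i) (a i)⁻¹ = 1; rw [map_inv, (ha i).2 h, inv_one]

lemma chainP_mono {n n' : ℕ} (h : n ≤ n') : chainP ps n ≤ chainP ps n' := by
  intro x hx i
  exact ⟨fun h2 => (hx i).1 (le_trans h h2), fun h2 => (hx i).2 (le_trans h h2)⟩

lemma chainP_normal (n : ℕ) : (chainP ps n).Normal := by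
  constructor
  intro x hx g i
  refine ⟨fun h => ?_, fun h => ?_⟩
  · show g i * x i * (g i)⁻¹ = 1
    rw [(hx i).1 h, mul_one, mul_inv_cancel]
  · show HR (ps i) (g i * x i * (g i)⁻¹) = 1
    rw [map_mul, map_mul, (hx i).2 h, mul_one, map_inv, mul_inv_cancel]

lemma chainP_zero : chainP ps 0 = ⊥ := by
  ext x
  simp only [Subgroup.mem_bot]
  constructor
  · intro hx; funext i; exact (hx i).1 (Nat.zero_le _)
  · rintro rfl; exact (chainP ps 0).one_mem

lemma chainP_top : chainP ps (2 * s) = ⊤ := by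
  ext x
  simp only [Subgroup.mem_top, iff_true]
  intro i
  exact ⟨fun h => absurd h (by have := i.isLt; omega),
    fun h => absurd h (by have := i.isLt; omega)⟩

lemma chainP_step_even (hps : ∀ i, (ps i).Prime) (t : ℕ) (ht : t < s) :
    ∃ g ∈ chainP ps (2 * t + 1), ∀ x ∈ chainP ps (2 * t + 1),
      ∃ (m : ℤ) (y : ∀ i, Holo (ps i)), y ∈ chainP ps (2 * t) ∧ x = g ^ m * y := by
  classical
  set T : Fin s := ⟨t, ht⟩ with hT
  have hTv : (T : ℕ) = t := rfl
  haveI : NeZero (ps T) := ⟨(hps T).ne_zero⟩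
  set g : ∀ i, Holo (ps i) :=
    Pi.mulSingle T (Hinl (ps T) (Multiplicative.ofAdd (1 : ZMod (ps T)))) with hg
  have hgT : g T = Hinl (ps T) (Multiplicative.ofAdd (1 : ZMod (ps T))) := Pi.mulSingle_eq_same ..
  have hgne : ∀ i, i ≠ T → g i = 1 := fun i hi => Pi.mulSingle_eq_of_ne hi _
  refine ⟨g, ?_, ?_⟩
  · intro i
    refine ⟨fun h => hgne i (by intro he; subst he; omega), fun h => ?_⟩
    by_cases he : i = T
    · subst he; rw [hgT]; exact HR_inl _
    · rw [hgne i he]; exact map_one _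
  · intro x hx
    set a : Multiplicative (ZMod (ps T)) := SemidirectProduct.left (x T) with ha
    set m : ℤ := ((Multiplicative.toAdd a).val : ℤ) with hm
    have hxT : x T = g T ^ m := by
      have h1 : x T = Hinl (ps T) a := eq_inl_of_right_eq_one _ ((hx T).2 (by omega))
      rw [hgT, ← map_zpow, h1]
      congr 1
      rw [← ofAdd_zsmul, zsmul_eq_mul, mul_one, hm, Int.cast_natCast, ZMod.natCast_val,
        ZMod.cast_id]
      exact (ofAdd_toAdd a).symm
    refine ⟨m, (g ^ m)⁻¹ * x, ?_, by group⟩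
    intro i
    by_cases he : i = T
    · subst he
      have : ((g ^ m)⁻¹ * x) T = 1 := by
        show (g T ^ m)⁻¹ * x T = 1
        rw [hxT, inv_mul_cancel]
      exact ⟨fun _ => this, fun _ => by rw [this]; exact map_one _⟩
    · have hne : (i : ℕ) ≠ t := fun hh => he (Fin.ext (by rw [hh, hTv]))
      have hii : ((g ^ m)⁻¹ * x) i = x i := by
        show ((g i) ^ m)⁻¹ * x i = x i
        rw [hgne i he, one_zpow, inv_one, one_mul]
      refine ⟨fun h => ?_, fun h => ?_⟩
      · rw [hii]; exact (hx i).1 (by omega)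
      · rw [hii]; exact (hx i).2 (by omega)

lemma chainP_step_odd (hps : ∀ i, (ps i).Prime) (t : ℕ) (ht : t < s) :
    ∃ g ∈ chainP ps (2 * t + 2), ∀ x ∈ chainP ps (2 * t + 2),
      ∃ (m : ℤ) (y : ∀ i, Holo (ps i)), y ∈ chainP ps (2 * t + 1) ∧ x = g ^ m * y := by
  classical
  set T : Fin s := ⟨t, ht⟩ with hT
  have hTv : (T : ℕ) = t := rfl
  haveI : Fact (ps T).Prime := ⟨hps T⟩
  obtain ⟨u, hu⟩ := IsCyclic.exists_generator (α := (ZMod (ps T))ˣ)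
  set g : ∀ i, Holo (ps i) := Pi.mulSingle T (Hinr (ps T) u) with hg
  have hgT : g T = Hinr (ps T) u := Pi.mulSingle_eq_same ..
  have hgne : ∀ i, i ≠ T → g i = 1 := fun i hi => Pi.mulSingle_eq_of_ne hi _
  refine ⟨g, ?_, ?_⟩
  · intro i
    refine ⟨fun h => hgne i (by intro he; subst he; omega),
            fun h => by rw [hgne i (by intro he; subst he; omega)]; exact map_one _⟩
  · intro x hx
    obtain ⟨m, hm⟩ := Subgroup.mem_zpowers_iff.mp (hu (HR (ps T) (x T)))
    refine ⟨m, (g ^ m)⁻¹ * x, ?_, by group⟩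
    intro i
    by_cases he : i = T
    · subst he
      refine ⟨fun h => absurd h (by omega), fun _ => ?_⟩
      show HR (ps T) ((g T ^ m)⁻¹ * x T) = 1
      rw [map_mul, map_inv, map_zpow, hgT, HR_inr, hm, inv_mul_cancel]
    · have hne : (i : ℕ) ≠ t := fun hh => he (Fin.ext (by rw [hh, hTv]))
      have hii : ((g ^ m)⁻¹ * x) i = x i := by
        show ((g i) ^ m)⁻¹ * x i = x i
        rw [hgne i he, one_zpow, inv_one, one_mul]
      refine ⟨fun h => ?_, fun h => ?_⟩
      · rw [hii]; exact (hx i).1 (by omega)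
      · rw [hii]; exact (hx i).2 (by omega)

lemma holo_pi_supersolvable (hps : ∀ i, (ps i).Prime) :
    IsSupersolvableGroup (∀ i, Holo (ps i)) := by
  refine ⟨2 * s, fun n => chainP ps n.val, ?_, ?_, ?_, fun n => chainP_normal ps n.val, ?_⟩
  · show chainP ps (0 : Fin (2 * s + 1)).val = ⊥
    rw [Fin.val_zero]; exact chainP_zero ps
  · show chainP ps (Fin.last (2 * s)).val = ⊤
    rw [Fin.val_last]; exact chainP_top ps
  · intro i
    show chainP ps i.castSucc.val ≤ chainP ps i.succ.val
    rw [Fin.coe_castSucc, Fin.val_succ]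
    exact chainP_mono ps (Nat.le_succ _)
  · intro i
    have hi : (i : ℕ) < 2 * s := i.isLt
    show ∃ g ∈ chainP ps i.succ.val, ∀ x ∈ chainP ps i.succ.val,
      ∃ (m : ℤ) (y : ∀ j, Holo (ps j)), y ∈ chainP ps i.castSucc.val ∧ x = g ^ m * y
    rw [Fin.val_succ, Fin.coe_castSucc]
    rcases Nat.even_or_odd (i : ℕ) with ⟨t, ht⟩ | ⟨t, ht⟩
    · have ht' : (i : ℕ) = 2 * t := by omega
      rw [ht']
      exact chainP_step_even ps hps t (by omega)
    · rw [show (i : ℕ) = 2 * t + 1 from ht]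
      have := chainP_step_odd ps hps t (by omega)
      simpa [show 2 * t + 1 + 1 = 2 * t + 2 from rfl] using this

lemma holo_pi_commutator_right (x : ∀ i, Holo (ps i)) (hx : x ∈ commutator (∀ i, Holo (ps i))) :
    ∀ i, HR (ps i) (x i) = 1 := by
  intro i
  set θ : (∀ j, Holo (ps j)) →* (ZMod (ps i))ˣ := (HR (ps i)).comp (Pi.evalMonoidHom _ i)
  have hker : commutator (∀ j, Holo (ps j)) ≤ θ.ker := by
    rw [commutator_def]
    refine Subgroup.commutator_le.mpr fun g1 _ g2 _ => ?_
    rw [MonoidHom.mem_ker, map_commutatorElement]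
    exact commutatorElement_eq_one_iff_commute.mpr (mul_comm (θ g1) (θ g2))
  exact hker hx

lemma holo_pi_metabelian (a b : ∀ i, Holo (ps i))
    (ha : a ∈ commutator (∀ i, Holo (ps i))) (hb : b ∈ commutator (∀ i, Holo (ps i))) :
    a * b = b * a := by
  funext i
  show a i * b i = b i * a i
  rw [eq_inl_of_right_eq_one (a i) (holo_pi_commutator_right ps a ha i),
    eq_inl_of_right_eq_one (b i) (holo_pi_commutator_right ps b hb i),
    ← map_mul, ← map_mul, mul_comm]

end Aux

/-! ### Facts about the quaternion group `Q₈` -/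

section Q8

abbrev Q8 := QuaternionGroup 2

def Z8 : Subgroup Q8 where
  carrier := {x | x = 1 ∨ x = QuaternionGroup.a 2}
  one_mem' := Or.inl rfl
  mul_mem' := fun {a b} ha hb =>
    (by decide : ∀ a b : Q8, (a = 1 ∨ a = .a 2) → (b = 1 ∨ b = .a 2) →
      (a * b = 1 ∨ a * b = .a 2)) a b ha hb
  inv_mem' := fun {a} ha =>
    (by decide : ∀ a : Q8, (a = 1 ∨ a = .a 2) → (a⁻¹ = 1 ∨ a⁻¹ = .a 2)) a ha

def C4 : Subgroup Q8 where
  carrier := {x | ∃ j : ZMod (2 * 2), x = QuaternionGroup.a j}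
  one_mem' := ⟨0, rfl⟩
  mul_mem' := fun {a b} ha hb =>
    (by decide : ∀ a b : Q8, (∃ j : ZMod (2 * 2), a = .a j) → (∃ j : ZMod (2 * 2), b = .a j) →
      ∃ j : ZMod (2 * 2), a * b = .a j) a b ha hb
  inv_mem' := fun {a} ha =>
    (by decide : ∀ a : Q8, (∃ j : ZMod (2 * 2), a = .a j) →
      ∃ j : ZMod (2 * 2), a⁻¹ = .a j) a ha

lemma mem_Z8 (x : Q8) : x ∈ Z8 ↔ (x = 1 ∨ x = QuaternionGroup.a 2) := Iff.rfl
lemma mem_C4 (x : Q8) : x ∈ C4 ↔ (∃ j : ZMod (2 * 2), x = QuaternionGroup.a j) := Iff.rfl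

lemma Z8_normal : Z8.Normal := by
  constructor
  intro n hn g
  rw [mem_Z8] at *
  exact (by decide : ∀ g n : Q8, (n = 1 ∨ n = .a 2) →
    (g * n * g⁻¹ = 1 ∨ g * n * g⁻¹ = .a 2)) g n hn

lemma C4_normal : C4.Normal := by
  constructor
  intro n hn g
  rw [mem_C4] at *
  exact (by decide : ∀ g n : Q8, (∃ j : ZMod (2 * 2), n = .a j) →
    (∃ j : ZMod (2 * 2), g * n * g⁻¹ = .a j)) g n hn

def cQ : Fin 4 → Subgroup Q8 := ![⊥, Z8, C4, ⊤]

lemma Q8_supersolvable : IsSupersolvableGroup Q8 := by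
  refine ⟨3, cQ, rfl, rfl, ?_, ?_, ?_⟩
  · intro i
    fin_cases i
    · exact bot_le
    · show Z8 ≤ C4
      intro x hx
      rw [mem_Z8] at hx
      rw [mem_C4]
      rcases hx with rfl | rfl
      exacts [⟨0, rfl⟩, ⟨2, rfl⟩]
    · exact le_top
  · intro i
    fin_cases i
    · show (⊥ : Subgroup Q8).Normal; infer_instance
    · exact Z8_normal
    · exact C4_normal
    · show (⊤ : Subgroup Q8).Normal; infer_instance
  · intro i
    fin_cases i
    · -- ⊥ to Z8
      refine ⟨QuaternionGroup.a 2, Or.inr rfl, ?_⟩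
      intro x hx
      rcases (mem_Z8 x).mp hx with rfl | rfl
      · exact ⟨0, 1, Subgroup.mem_bot.mpr rfl, by decide⟩
      · exact ⟨1, 1, Subgroup.mem_bot.mpr rfl, by decide⟩
    · -- Z8 to C4
      refine ⟨QuaternionGroup.a 1, ⟨1, rfl⟩, ?_⟩
      intro x hx
      obtain ⟨j, rfl⟩ := (mem_C4 x).mp hx
      refine ⟨(j.val : ℤ), 1, (mem_Z8 1).mpr (Or.inl rfl), ?_⟩
      rw [zpow_natCast, QuaternionGroup.a_one_pow, mul_one, ZMod.natCast_val, ZMod.cast_id]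
    · -- C4 to ⊤
      refine ⟨QuaternionGroup.xa 0, trivial, ?_⟩
      intro x _
      rcases x with j | j
      · exact ⟨0, QuaternionGroup.a j, ⟨j, rfl⟩, by rw [zpow_zero, one_mul]⟩
      · refine ⟨1, QuaternionGroup.a j, ⟨j, rfl⟩, ?_⟩
        rw [zpow_one, QuaternionGroup.xa_mul_a, zero_add]

open commutatorElement in
lemma Q8_metabelian : ∀ a b : commutator Q8, a * b = b * a := by
  have hle : commutator Q8 ≤ Z8 := by
    rw [commutator_def]
    refine Subgroup.commutator_le.mpr fun g1 _ g2 _ => (mem_Z8 _).mpr ?_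
    exact (by decide : ∀ g h : Q8, (⁅g, h⁆ = 1 ∨ ⁅g, h⁆ = .a 2)) g1 g2
  rintro ⟨a, ha⟩ ⟨b, hb⟩
  ext
  show a * b = b * a
  exact (by decide : ∀ a b : Q8, (a = 1 ∨ a = .a 2) → (b = 1 ∨ b = .a 2) → a * b = b * a)
    a b ((mem_Z8 a).mp (hle ha)) ((mem_Z8 b).mp (hle hb))

lemma Q8_key : ∀ x : Q8, x ≠ 1 → (x = QuaternionGroup.a 2 ∨ x * x = QuaternionGroup.a 2) := by
  decide

lemma Q8_not_embed_holo (p : ℕ) (hp : p.Prime) (g : Q8 →* Holo p) :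
    ¬ Function.Injective g := by
  intro hg
  by_cases hp2 : p = 2
  · -- cardinality contradiction
    subst hp2
    have hinj : Function.Injective
        (fun x : Q8 => (SemidirectProduct.left (g x), SemidirectProduct.right (g x))) := by
      intro x y hxy
      apply hg
      have h1 := congrArg Prod.fst hxy
      have h2 := congrArg Prod.snd hxy
      exact SemidirectProduct.ext h1 h2
    have hcard := Fintype.card_le_of_injective _ hinj
    rw [Fintype.card_prod] at hcard
    have h8 : Fintype.card Q8 = 8 := by decide
    have hm : Fintype.card (Multiplicative (ZMod 2)) = 2 := by decide
    have hu : Fintype.card (ZMod 2)ˣ = 1 := by decide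
    rw [h8, hm, hu] at hcard
    omega
  · -- p odd: push into the abelian group (ZMod p)ˣ
    haveI : Fact p.Prime := ⟨hp⟩
    set ψ : Q8 →* (ZMod p)ˣ := (HR p).comp g with hψdef
    have ha2 : (QuaternionGroup.a 2 : Q8) ≠ 1 := by decide
    have hψ : Function.Injective ψ := by
      rw [injective_iff_map_eq_one]
      intro x hx1
      by_contra hx
      have hz : ψ (QuaternionGroup.a 2) = 1 := by
        rcases Q8_key x hx with he | he
        · rw [← he]; exact hx1
        · rw [← he, map_mul, hx1, one_mul]
      set h := g (QuaternionGroup.a 2) with hh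
      have hr : HR p h = 1 := hz
      have hh1 : h ≠ 1 := fun e => ha2 (hg (show g _ = g 1 by rw [← hh, e, map_one]))
      have hsq : h * h = 1 := by
        rw [hh, ← map_mul, (by decide : (QuaternionGroup.a 2 : Q8) * .a 2 = 1), map_one]
      have hil := eq_inl_of_right_eq_one h hr
      have hll : SemidirectProduct.left h * SemidirectProduct.left h = 1 := by
        apply SemidirectProduct.inl_injective
          (φ := holAction p)
        rw [map_mul]
        show Hinl p _ * Hinl p _ = Hinl p 1
        rw [← hil, hsq, map_one]
      set m := Multiplicative.toAdd (SemidirectProduct.left h) with hmm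
      have hm : m + m = 0 := by
        have := congrArg Multiplicative.toAdd hll
        rwa [toAdd_mul, toAdd_one] at this
      have h2m : (2 : ZMod p) * m = 0 := by rw [two_mul]; exact hm
      have h2ne : (2 : ZMod p) ≠ 0 := by
        intro h2
        have : p ∣ 2 := by
          have := (ZMod.natCast_eq_zero_iff 2 p).mp (by exact_mod_cast h2)
          exact this
        have h1 := Nat.le_of_dvd (by norm_num) this
        have h2 := hp.two_le
        omega
      have hm0 : m = 0 := by
        rcases mul_eq_zero.mp h2m with h' | h'
        · exact absurd h' h2ne
        · exact h'
      have hleft : SemidirectProduct.left h = 1 := by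
        rw [← ofAdd_toAdd (SemidirectProduct.left h), ← hmm, hm0, ofAdd_zero]
      exact hh1 (by rw [hil, hleft, map_one])
    have habel := hψ (show ψ (QuaternionGroup.a 1 * QuaternionGroup.xa 0) =
        ψ (QuaternionGroup.xa 0 * QuaternionGroup.a 1) by rw [map_mul, map_mul, mul_comm])
    exact (by decide : (QuaternionGroup.a 1 : Q8) * .xa 0 ≠ .xa 0 * .a 1) habel

lemma Q8_not_embeds : ¬ EmbedsInHolos Q8 := by
  rintro ⟨s, ps, hps, f, hf⟩
  have ha2 : (QuaternionGroup.a 2 : Q8) ≠ 1 := by decide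
  have hcoord : ∃ i, Function.Injective
      ((Pi.evalMonoidHom (fun i => Holo (ps i)) i).comp f) := by
    by_contra h
    push_neg at h
    have ha2' : ∀ i, f (QuaternionGroup.a 2) i = 1 := by
      intro i
      set ψ : Q8 →* Holo (ps i) := (Pi.evalMonoidHom (fun i => Holo (ps i)) i).comp f with hψ
      obtain ⟨x, y, hxy, hne⟩ := Function.not_injective_iff.mp (h i)
      set z := x * y⁻¹ with hz
      have hz1 : z ≠ 1 := by
        intro hc
        exact hne (by rwa [hz, mul_inv_eq_one] at hc)
      have hzψ : ψ z = 1 := by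
        rw [hz, map_mul, map_inv, hxy, mul_inv_cancel]
      have : ψ (QuaternionGroup.a 2) = 1 := by
        rcases Q8_key z hz1 with he | he
        · rw [← he]; exact hzψ
        · rw [← he, map_mul, hzψ, one_mul]
      exact this
    have : f (QuaternionGroup.a 2) = 1 := funext ha2'
    exact ha2 (hf (by rw [this, map_one]))
  obtain ⟨i, hi⟩ := hcoord
  exact Q8_not_embed_holo (ps i) (hps i) _ hi

end Q8

/-- The quaternion group `Q₈` is supersolvable and metabelian, but does not embed into any
finite direct product `G_{p₁} × … × G_{p_s}` with the `pᵢ` prime. Consequently, the class of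
finite groups embeddable into such products (which is contained in the class of finite
supersolvable metabelian groups) is strictly contained in it. -/
theorem stmt_12 :
    IsSupersolvableGroup (QuaternionGroup 2) ∧
    (∀ a b : commutator (QuaternionGroup 2), a * b = b * a) ∧
    ¬ EmbedsInHolos (QuaternionGroup 2) ∧
    (∀ (G : Type) [Group G] [Finite G], EmbedsInHolos G →
      IsSupersolvableGroup G ∧ (∀ a b : commutator G, a * b = b * a)) := by
  refine ⟨Q8_supersolvable, Q8_metabelian, Q8_not_embeds, ?_⟩
  rintro G _ _ ⟨s, ps, hps, f, hf⟩
  exact ⟨supersolvable_of_injective f hf (holo_pi_supersolvable ps hps),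
    metabelian_of_injective f hf (holo_pi_metabelian ps)⟩
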